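/- There are isomorphisms of (ℂG, Z(A))-bimodules C(G,H,A)·ι(e_G) ≅ Fun_H(G, A·e_H) ≅ ℂG ⊗_{ℂH} (A·e_H), where ℂG acts on the left ideal C(G,H,A)·ι(e_G) by left multiplication via ι and on Fun_H(G, A·e_H) via (ι(g)f)(w) = f(wg), Z(A) acts by (pointwise) right multiplication, and A·e_H is regarded as a left ℂH-module via h·a = φ(h)a and a right Z(A)-module by right multiplication. -/

import Mathlib

open scoped BigOperators

section Setup
variable {G : Type} [Group G] [Fintype G] {H : Subgroup G} [Fintype H]
variable {A : Type} [Ring A] [Algebra ℂ A]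

/-- `Fun_H(G,A)`: the `H`-equivariant `A`-valued functions on `G`,
as a right `A`-module (i.e. a module over `Aᵐᵒᵖ`). -/
def FunH (φ : H →* Aˣ) : Submodule Aᵐᵒᵖ (G → A) where
  carrier := {f | ∀ (h : H) (g : G), f (↑h * g) = (φ h : A) * f g}
  add_mem' := by
    intro f g hf hg h x
    simp only [Pi.add_apply, hf h x, hg h x, mul_add]
  zero_mem' := by intro h x; simp
  smul_mem' := by
    intro a f hf h x
    simp only [Pi.smul_apply, MulOpposite.smul_eq_mul_unop, hf h x, mul_assoc]

variable (φ : H →* Aˣ)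

/-- `ι(w)`, the endomorphism `f ↦ (g ↦ f (g * w))` of the right `A`-module `Fun_H(G,A)`. -/
def iota (w : G) : Module.End Aᵐᵒᵖ (FunH (G := G) φ) where
  toFun f := ⟨fun g => (f : G → A) (g * w), fun h x => by
    simpa only [mul_assoc] using f.2 h (x * w)⟩
  map_add' f₁ f₂ := rfl
  map_smul' a f := rfl

/-- `ι(e_G)` where `e_G = |G|⁻¹ ∑_{g ∈ G} g` is the symmetrizing idempotent of `ℂG`. -/
noncomputable def iotaEG : Module.End Aᵐᵒᵖ (FunH (G := G) φ) :=
  (Fintype.card G : ℂ)⁻¹ • ∑ g : G, iota φ g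

/-- The idempotent `e_H = |H|⁻¹ ∑_{h ∈ H} φ(h) ∈ A`. -/
noncomputable def eH : A := (Fintype.card H : ℂ)⁻¹ • ∑ h : H, (φ h : A)

lemma phi_mul_eH (h : H) : (φ h : A) * eH φ = eH φ := by
  unfold eH
  rw [mul_smul_comm, Finset.mul_sum]
  congr 1
  exact Fintype.sum_equiv (Equiv.mulLeft h) _ _ (fun x => by
    simp [Equiv.mulLeft, ← Units.val_mul])

/-- The element `δ ∈ Fun_H(G,A)`, the constant function with value `e_H`. -/
noncomputable def delta : FunH (G := G) φ := ⟨fun _ => eH φ, fun h g => (phi_mul_eH φ h).symm⟩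

/-- `η(f)`: the right `A`-module endomorphism `h ↦ (w ↦ f(w) ⬝ ∑_{g ∈ G} h(g))`. -/
def eta (f : FunH (G := G) φ) : Module.End Aᵐᵒᵖ (FunH (G := G) φ) where
  toFun h := ⟨fun w => (f : G → A) w * ∑ g : G, (h : G → A) g, fun hh x => by
    simp only []
    rw [f.2 hh x, mul_assoc]⟩
  map_add' h₁ h₂ := by
    ext w
    simp [Finset.sum_add_distrib, mul_add]
  map_smul' a h := by
    ext w
    simp [MulOpposite.smul_eq_mul_unop, ← Finset.sum_mul, mul_assoc]

/-- Right multiplication by a central element `z`, as an endomorphism of `Fun_H(G,A)`. -/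
def rmul (z : A) (hz : z ∈ Set.center A) : Module.End Aᵐᵒᵖ (FunH (G := G) φ) where
  toFun f := ⟨fun w => (f : G → A) w * z, fun h x => by simp only []; rw [f.2 h x, mul_assoc]⟩
  map_add' f₁ f₂ := by ext w; simp [add_mul]
  map_smul' a f := by
    ext w
    simp only [Submodule.coe_smul, Pi.smul_apply, MulOpposite.smul_eq_mul_unop,
      mul_assoc]
    rw [hz.comm]; rfl
  
end Setup

section Induction
open TensorProduct

variable {G : Type} [Group G] [Fintype G] {H : Subgroup G} [Fintype H]
variable {A : Type} [Ring A] [Algebra ℂ A]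
variable (φ : H →* Aˣ)

/-- The right ideal `A·e_H`, as a `ℂ`-submodule of `A`. -/
noncomputable def AeH : Submodule ℂ A where
  carrier := {x | ∃ a : A, x = a * eH φ}
  add_mem' := by rintro x y ⟨a, rfl⟩ ⟨b, rfl⟩; exact ⟨a + b, (add_mul a b _).symm⟩
  zero_mem' := ⟨0, (zero_mul _).symm⟩
  smul_mem' := by rintro c x ⟨a, rfl⟩; exact ⟨c • a, (smul_mul_assoc c a _).symm⟩

/-- The left `ℂH`-module structure on `A·e_H`: `h · a = φ(h)a`. -/
noncomputable def hAct (h : H) (n : AeH (G := G) φ) : AeH (G := G) φ :=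
  ⟨(φ h : A) * n.1, by
    obtain ⟨a, ha⟩ := n.2
    exact ⟨(φ h : A) * a, by rw [ha, mul_assoc]⟩⟩

/-- The right `Z(A)`-module structure on `A·e_H`: right multiplication by a central `z`. -/
noncomputable def zAct (z : A) (hz : z ∈ Set.center A) (n : AeH (G := G) φ) :
    AeH (G := G) φ :=
  ⟨n.1 * z, by
    obtain ⟨a, ha⟩ := n.2
    exact ⟨a * z, by rw [ha, mul_assoc, ← hz.comm, ← mul_assoc]⟩⟩

/-- The subspace of relations defining the tensor product `ℂG ⊗_{ℂH} (A·e_H)`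
as a quotient of `ℂG ⊗_ℂ (A·e_H)`. -/
noncomputable def indRel : Submodule ℂ (MonoidAlgebra ℂ G ⊗[ℂ] AeH (G := G) φ) :=
  Submodule.span ℂ {x | ∃ (a : MonoidAlgebra ℂ G) (h : H) (n : AeH (G := G) φ),
    x = (a * MonoidAlgebra.single (h : G) (1 : ℂ)) ⊗ₜ[ℂ] n - a ⊗ₜ[ℂ] hAct φ h n}

/-- The induced module `ℂG ⊗_{ℂH} (A·e_H)`. -/
noncomputable abbrev Ind :=
  (MonoidAlgebra ℂ G ⊗[ℂ] AeH (G := G) φ) ⧸ indRel (G := G) φ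

/-- `Fun_H(G, A·e_H)`: the `H`-equivariant functions `G → A` all of whose values lie
in `A·e_H`, as a `ℂ`-submodule of `G → A`. -/
noncomputable def FunHe : Submodule ℂ (G → A) where
  carrier := {f | (∀ (h : H) (g : G), f (↑h * g) = (φ h : A) * f g) ∧
    ∀ g : G, ∃ a : A, f g = a * eH φ}
  add_mem' := by
    rintro f₁ f₂ ⟨he₁, hv₁⟩ ⟨he₂, hv₂⟩
    refine ⟨fun h x => by simp [he₁ h x, he₂ h x, mul_add], fun g => ?_⟩
    obtain ⟨a, ha⟩ := hv₁ g; obtain ⟨b, hb⟩ := hv₂ g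
    exact ⟨a + b, by simp [ha, hb, add_mul]⟩
  zero_mem' := ⟨fun h x => by simp, fun g => ⟨0, by simp⟩⟩
  smul_mem' := by
    rintro c f ⟨he, hv⟩
    refine ⟨fun h x => by simp [he h x, mul_smul_comm], fun g => ?_⟩
    obtain ⟨a, ha⟩ := hv g
    exact ⟨c • a, by simp [ha, smul_mul_assoc]⟩

/-- The left `ℂG`-action on `Fun_H(G, A·e_H)`: `(g · f)(w) = f(wg)`. -/
noncomputable def gAct (g : G) (f : FunHe (G := G) φ) : FunHe (G := G) φ :=
  ⟨fun w => f.1 (w * g),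
    ⟨fun h x => by simpa only [mul_assoc] using f.2.1 h (x * g), fun w => f.2.2 (w * g)⟩⟩


/-- The set of functions in `Fun_H(G,A)` all of whose values lie in `A·e_H`. -/
def FunHeSet : Set (FunH (G := G) φ) :=
  {f | ∀ g : G, ∃ a : A, (f : G → A) g = a * eH φ}

-- ===== Auxiliary lemmas (Part A) =====

lemma cardH_ne : (Fintype.card H : ℂ) ≠ 0 :=
  Nat.cast_ne_zero.mpr Fintype.card_ne_zero

lemma cardG_ne : (Fintype.card G : ℂ) ≠ 0 :=
  Nat.cast_ne_zero.mpr Fintype.card_ne_zero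

lemma eH_mul_self_of (v : A) (hv : ∀ h : H, (φ h : A) * v = v) : eH φ * v = v := by
  unfold eH
  rw [smul_mul_assoc, Finset.sum_mul]
  simp only [hv]
  rw [Finset.sum_const, Finset.card_univ, ← Nat.cast_smul_eq_nsmul ℂ, smul_smul,
    inv_mul_cancel₀ (cardH_ne (H := H)), one_smul]

lemma eH_idem : eH φ * eH φ = eH φ := eH_mul_self_of φ _ (phi_mul_eH φ)

lemma mul_eH_of (x : A) (hx : ∃ a : A, x = a * eH φ) : x * eH φ = x := by
  obtain ⟨a, rfl⟩ := hx; rw [mul_assoc, eH_idem]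

lemma op_smul_coe (a : A) (f : FunH (G := G) φ) (g : G) :
    ((MulOpposite.op a • f : FunH (G := G) φ) : G → A) g = (f : G → A) g * a := rfl

lemma iotaEG_coe (f : FunH (G := G) φ) (g : G) :
    ((iotaEG φ f : FunH (G := G) φ) : G → A) g
      = (Fintype.card G : ℂ)⁻¹ • ∑ u : G, (f : G → A) u := by
  unfold iotaEG
  rw [LinearMap.smul_apply, LinearMap.sum_apply]
  simp only [Submodule.coe_smul_of_tower, Pi.smul_apply, AddSubmonoidClass.coe_finset_sum,
    Finset.sum_apply]
  congr 1
  exact Fintype.sum_equiv (Equiv.mulLeft g) _ _ (fun w => rfl)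

lemma iotaEG_eq (f : FunH (G := G) φ) :
    iotaEG φ f
      = MulOpposite.op ((Fintype.card G : ℂ)⁻¹ • ∑ u : G, (f : G → A) u) • delta φ := by
  have hvv : ∀ h : H,
      (φ h : A) * ((Fintype.card G : ℂ)⁻¹ • ∑ u : G, (f : G → A) u)
        = (Fintype.card G : ℂ)⁻¹ • ∑ u : G, (f : G → A) u := by
    intro h
    rw [mul_smul_comm, Finset.mul_sum]
    congr 1
    exact Fintype.sum_equiv (Equiv.mulLeft (h : G)) _ _ (fun u => (f.2 h u).symm)
  apply Subtype.ext; funext g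
  rw [iotaEG_coe, op_smul_coe]
  exact (eH_mul_self_of φ _ hvv).symm

lemma iotaEG_delta : iotaEG φ (delta φ) = delta φ := by
  apply Subtype.ext; funext g
  rw [iotaEG_coe]
  show (Fintype.card G : ℂ)⁻¹ • ∑ _u : G, eH φ = eH φ
  rw [Finset.sum_const, Finset.card_univ, ← Nat.cast_smul_eq_nsmul ℂ, smul_smul,
    inv_mul_cancel₀ (cardG_ne (G := G)), one_smul]

lemma delta_op_eH : delta φ = MulOpposite.op (eH φ) • delta φ := by
  apply Subtype.ext; funext g
  rw [op_smul_coe]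
  exact (eH_idem φ).symm

theorem partA :
    (Set.BijOn (fun N : Module.End Aᵐᵒᵖ (FunH (G := G) φ) => N (delta φ))
      {N | ∃ M, N = M * iotaEG φ} (FunHeSet φ) ∧
    (∀ (g : G) (N : Module.End Aᵐᵒᵖ (FunH (G := G) φ)),
      (iota φ g * N) (delta φ) = iota φ g (N (delta φ))) ∧
    (∀ (z : A) (hz : z ∈ Set.center A) (N : Module.End Aᵐᵒᵖ (FunH (G := G) φ)),
      (rmul φ z hz * N) (delta φ) = MulOpposite.op z • (N (delta φ)))) := by
  refine ⟨⟨?_, ?_, ?_⟩, fun g N => rfl, fun z hz N => rfl⟩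
  · intro N _
    show N (delta φ) ∈ FunHeSet φ
    have h : N (delta φ) = MulOpposite.op (eH φ) • N (delta φ) := by
      nth_rewrite 1 [delta_op_eH φ]
      rw [map_smul]
    intro g
    refine ⟨(N (delta φ) : G → A) g, ?_⟩
    conv_lhs => rw [h]
    exact op_smul_coe φ _ _ g
  · rintro N₁ ⟨M₁, rfl⟩ N₂ ⟨M₂, rfl⟩ hEq
    have hEq' : (M₁ * iotaEG φ) (delta φ) = (M₂ * iotaEG φ) (delta φ) := hEq
    apply LinearMap.ext; intro f
    have key : ∀ M : Module.End Aᵐᵒᵖ (FunH (G := G) φ),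
        (M * iotaEG φ) f
          = MulOpposite.op ((Fintype.card G : ℂ)⁻¹ • ∑ u : G, (f : G → A) u) •
              (M * iotaEG φ) (delta φ) := by
      intro M
      rw [Module.End.mul_apply, Module.End.mul_apply, iotaEG_delta, iotaEG_eq φ f, map_smul]
    rw [key M₁, key M₂, hEq']
  · intro f hf
    refine ⟨((Fintype.card G : ℂ)⁻¹ • eta φ f) * iotaEG φ, ⟨_, rfl⟩, ?_⟩
    show (((Fintype.card G : ℂ)⁻¹ • eta φ f) * iotaEG φ) (delta φ) = f
    rw [Module.End.mul_apply, iotaEG_delta, LinearMap.smul_apply]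
    apply Subtype.ext; funext w
    simp only [Submodule.coe_smul_of_tower, Pi.smul_apply]
    show (Fintype.card G : ℂ)⁻¹ • ((f : G → A) w * ∑ _g : G, eH φ) = (f : G → A) w
    rw [Finset.sum_const, Finset.card_univ, ← Nat.cast_smul_eq_nsmul ℂ, mul_smul_comm,
      smul_smul, inv_mul_cancel₀ (cardG_ne (G := G)), one_smul, mul_eH_of φ _ (hf w)]

-- ===== Auxiliary definitions and lemmas (Part B) =====

/-- The values of the map `T : ℂG ⊗ A·e_H → Fun_H(G, A·e_H)`. -/
noncomputable def Tval (a : MonoidAlgebra ℂ G) (n : AeH (G := G) φ) : G → A :=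
  fun w => ∑ h : H, a.coeff (w⁻¹ * ↑h) • ((φ h : A) * n.1)

lemma Tval_mem (a : MonoidAlgebra ℂ G) (n : AeH (G := G) φ) :
    Tval φ a n ∈ FunHe (G := G) φ := by
  constructor
  · intro h₀ x
    show (∑ h : H, a.coeff ((↑h₀ * x)⁻¹ * ↑h) • ((φ h : A) * n.1))
      = (φ h₀ : A) * ∑ h : H, a.coeff (x⁻¹ * ↑h) • ((φ h : A) * n.1)
    rw [Finset.mul_sum]
    refine Fintype.sum_equiv (Equiv.mulLeft h₀⁻¹) _ _ (fun h => ?_)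
    simp only [Equiv.coe_mulLeft, mul_smul_comm, Subgroup.coe_mul, InvMemClass.coe_inv,
      mul_inv_rev, mul_assoc]
    rw [← mul_assoc ((φ h₀ : A)), ← Units.val_mul, ← map_mul, mul_inv_cancel_left]
  · intro g
    obtain ⟨b, hb⟩ := n.2
    refine ⟨∑ h : H, a.coeff (g⁻¹ * ↑h) • ((φ h : A) * b), ?_⟩
    show (∑ h : H, a.coeff (g⁻¹ * ↑h) • ((φ h : A) * n.1)) = _
    rw [Finset.sum_mul]
    refine Finset.sum_congr rfl fun h _ => ?_
    rw [hb, smul_mul_assoc, mul_assoc]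

/-- The bilinear map underlying `T`. -/
noncomputable def Tlin : MonoidAlgebra ℂ G →ₗ[ℂ] AeH (G := G) φ →ₗ[ℂ] FunHe (G := G) φ where
  toFun a :=
    { toFun := fun n => ⟨Tval φ a n, Tval_mem φ a n⟩
      map_add' := fun n₁ n₂ => Subtype.ext (by
        funext w
        simp [Tval, mul_add, smul_add, Finset.sum_add_distrib])
      map_smul' := fun c n => Subtype.ext (by
        funext w
        simp [Tval, Finset.smul_sum, mul_smul_comm, smul_comm c]) }
  map_add' a₁ a₂ := LinearMap.ext fun n => Subtype.ext (by
    funext w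
    have hx : ∀ x : G, (a₁ + a₂).coeff x = a₁.coeff x + a₂.coeff x := fun _ => rfl
    simp [Tval, hx, add_smul, Finset.sum_add_distrib])
  map_smul' c a := LinearMap.ext fun n => Subtype.ext (by
    funext w
    have hx : ∀ x : G, (c • a).coeff x = c * a.coeff x := fun _ => rfl
    simp [Tval, hx, smul_smul, Finset.smul_sum])

lemma T_apply (a : MonoidAlgebra ℂ G) (n : AeH (G := G) φ) (w : G) :
    ((TensorProduct.lift (Tlin φ) (a ⊗ₜ[ℂ] n) : FunHe (G := G) φ) : G → A) w
      = ∑ h : H, a.coeff (w⁻¹ * ↑h) • ((φ h : A) * n.1) := by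
  rw [TensorProduct.lift.tmul]; rfl

lemma T_rel (a : MonoidAlgebra ℂ G) (h₀ : H) (n : AeH (G := G) φ) :
    TensorProduct.lift (Tlin φ) ((a * MonoidAlgebra.single (↑h₀ : G) (1 : ℂ)) ⊗ₜ[ℂ] n)
      = TensorProduct.lift (Tlin φ) (a ⊗ₜ[ℂ] hAct φ h₀ n) := by
  apply Subtype.ext; funext w
  rw [T_apply, T_apply]
  refine Fintype.sum_equiv (Equiv.mulRight h₀⁻¹) _ _ (fun h => ?_)
  rw [MonoidAlgebra.mul_single_apply, mul_one]
  show a.coeff (w⁻¹ * ↑h * (↑h₀)⁻¹) • ((φ h : A) * n.1)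
    = a.coeff (w⁻¹ * ↑(h * h₀⁻¹)) • ((φ (h * h₀⁻¹) : A) * (hAct φ h₀ n).1)
  have h1 : (↑(h * h₀⁻¹) : G) = ↑h * (↑h₀)⁻¹ := rfl
  have h2 : (φ (h * h₀⁻¹) : A) * (hAct φ h₀ n).1 = (φ h : A) * n.1 := by
    show (φ (h * h₀⁻¹) : A) * ((φ h₀ : A) * n.1) = _
    rw [← mul_assoc, ← Units.val_mul, ← map_mul, inv_mul_cancel_right]
  rw [h1, h2, mul_assoc]

lemma gAct_coe (g : G) (f : FunHe (G := G) φ) (w : G) :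
    ((gAct φ g f : FunHe (G := G) φ) : G → A) w = (f : G → A) (w * g) := rfl

lemma T_gact (g : G) (a : MonoidAlgebra ℂ G) (n : AeH (G := G) φ) :
    TensorProduct.lift (Tlin φ) ((MonoidAlgebra.single g (1 : ℂ) * a) ⊗ₜ[ℂ] n)
      = gAct φ g (TensorProduct.lift (Tlin φ) (a ⊗ₜ[ℂ] n)) := by
  apply Subtype.ext; funext w
  rw [T_apply, gAct_coe, T_apply]
  refine Finset.sum_congr rfl fun h _ => ?_
  rw [MonoidAlgebra.single_mul_apply, one_mul, mul_inv_rev, mul_assoc]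

lemma T_zact (z : A) (hz : z ∈ Set.center A) (a : MonoidAlgebra ℂ G)
    (n : AeH (G := G) φ) (w : G) :
    ((TensorProduct.lift (Tlin φ) (a ⊗ₜ[ℂ] zAct φ z hz n) : FunHe (G := G) φ) : G → A) w
      = ((TensorProduct.lift (Tlin φ) (a ⊗ₜ[ℂ] n) : FunHe (G := G) φ) : G → A) w * z := by
  rw [T_apply, T_apply, Finset.sum_mul]
  refine Finset.sum_congr rfl fun h _ => ?_
  show a.coeff (w⁻¹ * ↑h) • ((φ h : A) * (n.1 * z)) = a.coeff (w⁻¹ * ↑h) • ((φ h : A) * n.1) * z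
  rw [smul_mul_assoc, mul_assoc]

/-- The inverse map `S : Fun_H(G, A·e_H) → ℂG ⊗ A·e_H`. -/
noncomputable def Sfun : FunHe (G := G) φ →ₗ[ℂ] MonoidAlgebra ℂ G ⊗[ℂ] AeH (G := G) φ where
  toFun f := (Fintype.card H : ℂ)⁻¹ •
    ∑ g : G, MonoidAlgebra.single g⁻¹ (1 : ℂ) ⊗ₜ[ℂ] (⟨f.1 g, f.2.2 g⟩ : AeH (G := G) φ)
  map_add' f₁ f₂ := by
    have h : ∀ g : G, (⟨(f₁ + f₂).1 g, (f₁ + f₂).2.2 g⟩ : AeH (G := G) φ)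
        = (⟨f₁.1 g, f₁.2.2 g⟩ : AeH (G := G) φ) + ⟨f₂.1 g, f₂.2.2 g⟩ :=
      fun g => Subtype.ext rfl
    simp only [h, TensorProduct.tmul_add, Finset.sum_add_distrib, smul_add]
  map_smul' c f := by
    have h : ∀ g : G, (⟨(c • f).1 g, (c • f).2.2 g⟩ : AeH (G := G) φ)
        = c • (⟨f.1 g, f.2.2 g⟩ : AeH (G := G) φ) :=
      fun g => Subtype.ext rfl
    simp only [RingHom.id_apply, h, TensorProduct.tmul_smul]
    rw [← Finset.smul_sum, smul_comm ((Fintype.card H : ℂ)⁻¹) c]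

lemma T_S (f : FunHe (G := G) φ) :
    TensorProduct.lift (Tlin φ) (Sfun φ f) = f := by
  classical
  apply Subtype.ext; funext w
  have h1 : ((TensorProduct.lift (Tlin φ) (Sfun φ f) : FunHe (G := G) φ) : G → A) w
      = (Fintype.card H : ℂ)⁻¹ • ∑ g : G, ∑ h : H,
          (MonoidAlgebra.single g⁻¹ (1 : ℂ) : MonoidAlgebra ℂ G).coeff (w⁻¹ * ↑h) •
            ((φ h : A) * f.1 g) := by
    show ((TensorProduct.lift (Tlin φ) ((Fintype.card H : ℂ)⁻¹ •
      ∑ g : G, MonoidAlgebra.single g⁻¹ (1 : ℂ) ⊗ₜ[ℂ]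
        (⟨f.1 g, f.2.2 g⟩ : AeH (G := G) φ)) : FunHe (G := G) φ) : G → A) w = _
    rw [map_smul, map_sum]
    simp only [Submodule.coe_smul_of_tower, Pi.smul_apply, AddSubmonoidClass.coe_finset_sum,
      Finset.sum_apply]
    congr 1
  rw [h1, Finset.sum_comm]
  have h2 : ∀ h : H, (∑ g : G,
      (MonoidAlgebra.single g⁻¹ (1 : ℂ) : MonoidAlgebra ℂ G).coeff (w⁻¹ * ↑h) •
        ((φ h : A) * f.1 g)) = f.1 w := by
    intro h
    have e1 : (∑ g : G, (MonoidAlgebra.single g⁻¹ (1 : ℂ) : MonoidAlgebra ℂ G).coeff (w⁻¹ * ↑h) •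
          ((φ h : A) * f.1 g))
        = ∑ u : G, (MonoidAlgebra.single u (1 : ℂ) : MonoidAlgebra ℂ G).coeff (w⁻¹ * ↑h) •
          ((φ h : A) * f.1 u⁻¹) :=
      Fintype.sum_equiv (Equiv.inv G)
        (fun g => (MonoidAlgebra.single g⁻¹ (1 : ℂ) : MonoidAlgebra ℂ G).coeff (w⁻¹ * ↑h) •
          ((φ h : A) * f.1 g))
        (fun u => (MonoidAlgebra.single u (1 : ℂ) : MonoidAlgebra ℂ G).coeff (w⁻¹ * ↑h) •
          ((φ h : A) * f.1 u⁻¹)) (fun g => by simp)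
    rw [e1]
    simp only [MonoidAlgebra.single_apply, ite_smul, one_smul, zero_smul]
    rw [Finset.sum_ite_eq' Finset.univ (w⁻¹ * ↑h)
      (fun u => (φ h : A) * f.1 u⁻¹), if_pos (Finset.mem_univ _)]
    rw [mul_inv_rev, inv_inv, ← f.2.1 h ((↑h)⁻¹ * w), mul_inv_cancel_left]
  rw [Finset.sum_congr rfl fun h _ => h2 h, Finset.sum_const, Finset.card_univ,
    ← Nat.cast_smul_eq_nsmul ℂ, smul_smul, inv_mul_cancel₀ (cardH_ne (H := H)), one_smul]

lemma mkQ_hAct (a : MonoidAlgebra ℂ G) (h : H) (n : AeH (G := G) φ) :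
    (indRel (G := G) φ).mkQ (a ⊗ₜ[ℂ] hAct φ h n)
      = (indRel (G := G) φ).mkQ ((a * MonoidAlgebra.single (↑h : G) (1 : ℂ)) ⊗ₜ[ℂ] n) := by
  rw [Submodule.mkQ_apply, Submodule.mkQ_apply, eq_comm, Submodule.Quotient.eq]
  exact Submodule.subset_span ⟨a, h, n, rfl⟩

lemma S_T : ((indRel (G := G) φ).mkQ.comp
      ((Sfun φ).comp (TensorProduct.lift (Tlin φ))))
    = (indRel (G := G) φ).mkQ := by
  classical
  apply TensorProduct.ext
  apply MonoidAlgebra.lhom_ext'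
  intro g
  apply LinearMap.ext; intro c
  apply LinearMap.ext; intro n
  show (indRel (G := G) φ).mkQ (Sfun φ
      (TensorProduct.lift (Tlin φ) (MonoidAlgebra.single g c ⊗ₜ[ℂ] n)))
    = (indRel (G := G) φ).mkQ (MonoidAlgebra.single g c ⊗ₜ[ℂ] n)
  have hFval : ∀ (w : G) (p : ∃ b : A,
      (TensorProduct.lift (Tlin φ) (MonoidAlgebra.single g c ⊗ₜ[ℂ] n)).1 w = b * eH φ),
      (⟨(TensorProduct.lift (Tlin φ) (MonoidAlgebra.single g c ⊗ₜ[ℂ] n)).1 w, p⟩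
          : AeH (G := G) φ)
        = ∑ h : H, (MonoidAlgebra.single g c : MonoidAlgebra ℂ G).coeff (w⁻¹ * ↑h) •
            hAct φ h n := by
    intro w p
    apply Subtype.ext
    show (TensorProduct.lift (Tlin φ) (MonoidAlgebra.single g c ⊗ₜ[ℂ] n)).1 w = _
    rw [T_apply]
    simp only [AddSubmonoidClass.coe_finset_sum, SetLike.val_smul]
    rfl
  have hS : Sfun φ (TensorProduct.lift (Tlin φ) (MonoidAlgebra.single g c ⊗ₜ[ℂ] n))
      = (Fintype.card H : ℂ)⁻¹ • ∑ w : G, ∑ h : H,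
          (MonoidAlgebra.single g c : MonoidAlgebra ℂ G).coeff (w⁻¹ * ↑h) •
            (MonoidAlgebra.single w⁻¹ (1 : ℂ) ⊗ₜ[ℂ] hAct φ h n) := by
    show (Fintype.card H : ℂ)⁻¹ • ∑ w : G, MonoidAlgebra.single w⁻¹ (1 : ℂ) ⊗ₜ[ℂ] _ = _
    congr 1
    refine Finset.sum_congr rfl fun w _ => ?_
    rw [hFval w _, TensorProduct.tmul_sum]
    exact Finset.sum_congr rfl fun h _ => TensorProduct.tmul_smul _ _ _
  rw [hS, map_smul, map_sum]
  have hInner : ∀ w : G, (indRel (G := G) φ).mkQ (∑ h : H,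
        (MonoidAlgebra.single g c : MonoidAlgebra ℂ G).coeff (w⁻¹ * ↑h) •
          (MonoidAlgebra.single w⁻¹ (1 : ℂ) ⊗ₜ[ℂ] hAct φ h n))
      = ∑ h : H, (MonoidAlgebra.single g c : MonoidAlgebra ℂ G).coeff (w⁻¹ * ↑h) •
          (indRel (G := G) φ).mkQ (MonoidAlgebra.single (w⁻¹ * ↑h) (1 : ℂ) ⊗ₜ[ℂ] n) := by
    intro w
    rw [map_sum]
    refine Finset.sum_congr rfl fun h _ => ?_
    rw [map_smul, mkQ_hAct, MonoidAlgebra.single_mul_single, one_mul]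
  rw [Finset.sum_congr rfl fun w _ => hInner w, Finset.sum_comm]
  have hW : ∀ h : H, (∑ w : G,
      (MonoidAlgebra.single g c : MonoidAlgebra ℂ G).coeff (w⁻¹ * ↑h) •
        (indRel (G := G) φ).mkQ (MonoidAlgebra.single (w⁻¹ * ↑h) (1 : ℂ) ⊗ₜ[ℂ] n))
      = c • (indRel (G := G) φ).mkQ (MonoidAlgebra.single g (1 : ℂ) ⊗ₜ[ℂ] n) := by
    intro h
    have e1 : (∑ w : G, (MonoidAlgebra.single g c : MonoidAlgebra ℂ G).coeff (w⁻¹ * ↑h) •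
          (indRel (G := G) φ).mkQ (MonoidAlgebra.single (w⁻¹ * ↑h) (1 : ℂ) ⊗ₜ[ℂ] n))
        = ∑ u : G, (MonoidAlgebra.single g c : MonoidAlgebra ℂ G).coeff u •
          (indRel (G := G) φ).mkQ (MonoidAlgebra.single u (1 : ℂ) ⊗ₜ[ℂ] n) :=
      Fintype.sum_equiv ((Equiv.inv G).trans (Equiv.mulRight (↑h : G)))
        (fun w => (MonoidAlgebra.single g c : MonoidAlgebra ℂ G).coeff (w⁻¹ * ↑h) •
          (indRel (G := G) φ).mkQ (MonoidAlgebra.single (w⁻¹ * ↑h) (1 : ℂ) ⊗ₜ[ℂ] n))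
        (fun u => (MonoidAlgebra.single g c : MonoidAlgebra ℂ G).coeff u •
          (indRel (G := G) φ).mkQ (MonoidAlgebra.single u (1 : ℂ) ⊗ₜ[ℂ] n))
        (fun w => by simp)
    rw [e1]
    simp only [MonoidAlgebra.single_apply, ite_smul, zero_smul]
    rw [Finset.sum_ite_eq Finset.univ g
      (fun u => c • (indRel (G := G) φ).mkQ (MonoidAlgebra.single u (1 : ℂ) ⊗ₜ[ℂ] n)),
      if_pos (Finset.mem_univ _)]
  rw [Finset.sum_congr rfl fun h _ => hW h, Finset.sum_const, Finset.card_univ,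
    ← Nat.cast_smul_eq_nsmul ℂ, smul_smul, smul_smul,
    inv_mul_cancel₀ (cardH_ne (H := H)), one_mul, ← map_smul,
    TensorProduct.smul_tmul', MonoidAlgebra.smul_single', mul_one]

/-- The induced isomorphism `Ind ≃ FunHe`. -/
noncomputable def Tbar : Ind (G := G) φ →ₗ[ℂ] FunHe (G := G) φ :=
  Submodule.liftQ _ (TensorProduct.lift (Tlin φ)) (by
    rw [indRel, Submodule.span_le]
    rintro x ⟨a, h, n, rfl⟩
    simp only [SetLike.mem_coe, LinearMap.mem_ker, map_sub, sub_eq_zero]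
    exact T_rel φ a h n)

noncomputable def eIso : Ind (G := G) φ ≃ₗ[ℂ] FunHe (G := G) φ :=
  LinearEquiv.ofLinear (Tbar φ) ((indRel (G := G) φ).mkQ.comp (Sfun φ))
    (by
      apply LinearMap.ext; intro f
      show Tbar φ ((indRel (G := G) φ).mkQ (Sfun φ f)) = f
      rw [Submodule.mkQ_apply]
      exact (Submodule.liftQ_apply _ _ _).trans (T_S φ f))
    (by
      apply Submodule.linearMap_qext
      apply LinearMap.ext; intro x
      have h := LinearMap.congr_fun (S_T (G := G) φ) x
      simp only [LinearMap.comp_apply] at h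
      have h2 : Tbar φ ((indRel (G := G) φ).mkQ x) = TensorProduct.lift (Tlin φ) x := by
        rw [Tbar, Submodule.mkQ_apply, Submodule.liftQ_apply]
      show (indRel (G := G) φ).mkQ (Sfun φ (Tbar φ ((indRel (G := G) φ).mkQ x)))
        = (indRel (G := G) φ).mkQ x
      rw [h2, h])

lemma eIso_mkQ (x : MonoidAlgebra ℂ G ⊗[ℂ] AeH (G := G) φ) :
    eIso φ ((indRel (G := G) φ).mkQ x) = TensorProduct.lift (Tlin φ) x := by
  rw [eIso, LinearEquiv.ofLinear_apply, Submodule.mkQ_apply, Tbar, Submodule.liftQ_apply]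

theorem partB :
    (∃ e : Ind (G := G) φ ≃ₗ[ℂ] FunHe (G := G) φ,
      (∀ (g : G) (a : MonoidAlgebra ℂ G) (n : AeH (G := G) φ),
        e ((indRel φ).mkQ ((MonoidAlgebra.single g (1 : ℂ) * a) ⊗ₜ[ℂ] n)) =
          gAct φ g (e ((indRel φ).mkQ (a ⊗ₜ[ℂ] n)))) ∧
      (∀ (z : A) (hz : z ∈ Set.center A) (a : MonoidAlgebra ℂ G) (n : AeH (G := G) φ),
        (e ((indRel φ).mkQ (a ⊗ₜ[ℂ] zAct φ z hz n)) : G → A) =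
          fun w => (e ((indRel φ).mkQ (a ⊗ₜ[ℂ] n)) : G → A) w * z)) := by
  refine ⟨eIso φ, fun g a n => ?_, fun z hz a n => ?_⟩
  · rw [eIso_mkQ, eIso_mkQ, T_gact]
  · rw [eIso_mkQ, eIso_mkQ]
    funext w
    exact T_zact φ z hz a n w

/-- There are isomorphisms of `(ℂG, Z(A))`-bimodules
`C(G,H,A)·ι(e_G) ≅ Fun_H(G, A·e_H) ≅ ℂG ⊗_{ℂH} (A·e_H)`: the map `ζ : N ↦ N(δ)` is a
`ℂG`- and `Z(A)`-equivariant bijection from the left ideal `C(G,H,A)·ι(e_G)` onto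
`Fun_H(G, A·e_H)`, and there is a `ℂG`- and `Z(A)`-equivariant linear isomorphism
`ℂG ⊗_{ℂH} (A·e_H) ≅ Fun_H(G, A·e_H)`. -/
theorem statement4 :
    (Set.BijOn (fun N : Module.End Aᵐᵒᵖ (FunH (G := G) φ) => N (delta φ))
      {N | ∃ M, N = M * iotaEG φ} (FunHeSet φ) ∧
    (∀ (g : G) (N : Module.End Aᵐᵒᵖ (FunH (G := G) φ)),
      (iota φ g * N) (delta φ) = iota φ g (N (delta φ))) ∧
    (∀ (z : A) (hz : z ∈ Set.center A) (N : Module.End Aᵐᵒᵖ (FunH (G := G) φ)),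
      (rmul φ z hz * N) (delta φ) = MulOpposite.op z • (N (delta φ)))) ∧
    (∃ e : Ind (G := G) φ ≃ₗ[ℂ] FunHe (G := G) φ,
      (∀ (g : G) (a : MonoidAlgebra ℂ G) (n : AeH (G := G) φ),
        e ((indRel φ).mkQ ((MonoidAlgebra.single g (1 : ℂ) * a) ⊗ₜ[ℂ] n)) =
          gAct φ g (e ((indRel φ).mkQ (a ⊗ₜ[ℂ] n)))) ∧
      (∀ (z : A) (hz : z ∈ Set.center A) (a : MonoidAlgebra ℂ G) (n : AeH (G := G) φ),
        (e ((indRel φ).mkQ (a ⊗ₜ[ℂ] zAct φ z hz n)) : G → A) =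
          fun w => (e ((indRel φ).mkQ (a ⊗ₜ[ℂ] n)) : G → A) w * z)) :=
  ⟨partA φ, partB φ⟩

end Induction
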